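/- Let m ≥ 2, n ≥ 2, and let f be a maximal IC-coloring of K_{1(n),m} with vertices listed as u_1, …, u_{m+n} so that f(u_i) < f(u_{i+1}) for all i. Set s_0 = 0, s_i = f(u_i), and r_i = s_i − ∑_{j=0}^{i−1} s_j for 1 ≤ i ≤ m+n. Then r_i ≤ 1 for all i. -/

import Mathlib

/-- The join `H₀ ∨ H₁` of two graphs: all edges of `H₀`, all edges of `H₁`, and all
pairs with one endpoint in each. -/
def graphJoin {α β : Type*} (G : SimpleGraph α) (H : SimpleGraph β) :
    SimpleGraph (α ⊕ β) where
  Adj x y :=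
    match x, y with
    | Sum.inl a, Sum.inl b => G.Adj a b
    | Sum.inr a, Sum.inr b => H.Adj a b
    | Sum.inl _, Sum.inr _ => True
    | Sum.inr _, Sum.inl _ => True
  symm := ⟨by
    rintro (a | a) (b | b) h
    · exact G.symm.symm _ _ h
    · trivial
    · trivial
    · exact H.symm.symm _ _ h⟩
  loopless := ⟨by
    rintro (a | a) h
    · exact G.loopless.irrefl a h
    · exact H.loopless.irrefl a h⟩

/-- A coloring `f : V(G) → ℕ` (positive-valued) is an IC-coloring if every integer
`k` with `1 ≤ k ≤ f(G)` is the `f`-sum of some nonempty vertex subset inducing a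
connected subgraph. -/
def IsICColoring {α : Type*} [Fintype α] (G : SimpleGraph α) (f : α → ℕ) : Prop :=
  (∀ v, 0 < f v) ∧
    ∀ k : ℕ, 1 ≤ k → k ≤ ∑ v, f v →
      ∃ S : Finset α, S.Nonempty ∧ (G.induce (S : Set α)).Connected ∧
        ∑ v ∈ S, f v = k

/-- The IC-index `M(G)`: the maximum of `f(G)` over all IC-colorings `f` of `G`. -/
noncomputable def ICIndex {α : Type*} [Fintype α] (G : SimpleGraph α) : ℕ :=
  sSup {t | ∃ f : α → ℕ, IsICColoring G f ∧ ∑ v, f v = t}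

/-- `K_{1(n),m} = O_m ∨ K_n`: the complete `(n+1)`-partite graph with `n` parts of
size one and one part (`V₀ = Fin m`, the left summand) of size `m`. -/
def K1nm (m n : ℕ) : SimpleGraph (Fin m ⊕ Fin n) :=
  graphJoin (⊥ : SimpleGraph (Fin m)) (⊤ : SimpleGraph (Fin n))

/-- Let `m, n ≥ 2` and `f` a maximal IC-coloring of `K_{1(n),m}`,
with vertices listed as `u 1, …, u (m+n)` so that `f` is strictly increasing along the
list.  With `s 0 = 0`, `s i = f (u i)` and `r i = s i − ∑_{j=0}^{i−1} s j`, we have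
`r i ≤ 1` for all `1 ≤ i ≤ m + n`. -/
theorem stmt_13 (m n : ℕ) (hm : 2 ≤ m) (hn : 2 ≤ n)
    (f : Fin m ⊕ Fin n → ℕ) (hf : IsICColoring (K1nm m n) f)
    (hmax : ∑ v, f v = ICIndex (K1nm m n))
    (u : ℕ → Fin m ⊕ Fin n) (hu : Set.BijOn u (Set.Icc 1 (m + n)) Set.univ)
    (hmono : ∀ i, 1 ≤ i → i + 1 ≤ m + n → f (u i) < f (u (i + 1)))
    (s r : ℕ → ℤ) (hs0 : s 0 = 0)
    (hs : ∀ i, 1 ≤ i → i ≤ m + n → s i = f (u i))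
    (hr : ∀ i, 1 ≤ i → i ≤ m + n → r i = s i - ∑ j ∈ Finset.range i, s j) :
    ∀ i, 1 ≤ i → i ≤ m + n → r i ≤ 1 := by
  intro i hi1 hi2
  by_contra hcon
  push_neg at hcon
  set T : ℕ := ∑ j ∈ Finset.Ico 1 i, f (u j) with hT
  have hsum : ∑ j ∈ Finset.range i, s j = (T : ℤ) := by
    rw [Finset.range_eq_Ico, ← Finset.sum_Ico_consecutive _ (Nat.zero_le 1) hi1]
    have h0 : ∑ j ∈ Finset.Ico 0 1, s j = 0 := by simp [hs0]
    rw [h0, zero_add, hT]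
    push_cast
    apply Finset.sum_congr rfl
    intro j hj
    obtain ⟨hj1, hj2⟩ := Finset.mem_Ico.mp hj
    exact hs j hj1 (le_of_lt (lt_of_lt_of_le hj2 hi2))
  have hri : r i = (f (u i) : ℤ) - T := by
    rw [hr i hi1 hi2, hs i hi1 hi2, hsum]
  have hfi : (T : ℤ) + 2 ≤ (f (u i) : ℤ) := by
    rw [hri] at hcon; linarith
  have hfiN : T + 2 ≤ f (u i) := by exact_mod_cast hfi
  have mono : ∀ b, b ≤ m + n → ∀ a, 1 ≤ a → a ≤ b → f (u a) ≤ f (u b) := by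
    intro b
    induction b with
    | zero => intro _ a ha hab; omega
    | succ b ih =>
      intro hb a ha hab
      rcases Nat.eq_or_lt_of_le hab with h | h
      · rw [h]
      · have hab' : a ≤ b := Nat.lt_succ_iff.mp h
        have h1b : 1 ≤ b := le_trans ha hab'
        exact le_of_lt (lt_of_le_of_lt (ih (by omega) a ha hab') (hmono b h1b hb))
  have htot : f (u i) ≤ ∑ v, f v :=
    Finset.single_le_sum (fun v _ => Nat.zero_le _) (Finset.mem_univ _)
  obtain ⟨S, hSne, _, hSsum⟩ := hf.2 (T + 1) (by omega) (by omega)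
  have hvlt : ∀ v ∈ S, f v < f (u i) := by
    intro v hv
    have h1 : f v ≤ T + 1 := hSsum ▸ Finset.single_le_sum (fun w _ => Nat.zero_le _) hv
    omega
  have hSsub : S ⊆ (Finset.Ico 1 i).image u := by
    intro v hv
    obtain ⟨j, hj, hjv⟩ := hu.surjOn (Set.mem_univ v)
    have hji : j < i := by
      by_contra hji
      push_neg at hji
      have := mono j hj.2 i hi1 hji
      rw [hjv] at this
      exact absurd this (not_le.mpr (hvlt v hv))
    exact Finset.mem_image.mpr ⟨j, Finset.mem_Ico.mpr ⟨hj.1, hji⟩, hjv⟩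
  have hle : ∑ v ∈ S, f v ≤ ∑ v ∈ (Finset.Ico 1 i).image u, f v :=
    Finset.sum_le_sum_of_subset hSsub
  have himg : ∑ v ∈ (Finset.Ico 1 i).image u, f v = T := by
    rw [hT]
    apply Finset.sum_image
    intro a ha b hb hab
    obtain ⟨ha1, ha2⟩ := Finset.mem_Ico.mp ha
    obtain ⟨hb1, hb2⟩ := Finset.mem_Ico.mp hb
    exact hu.injOn ⟨ha1, le_of_lt (lt_of_lt_of_le ha2 hi2)⟩
      ⟨hb1, le_of_lt (lt_of_lt_of_le hb2 hi2)⟩ hab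
  omega
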